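/- Let w ∈ ℝ^n be a vector whose coordinates are linearly independent over ℚ. Let L_σ and L_τ be linear subspaces of ℝ^n defined over ℚ (i.e., spanned by rational vectors). If there exist points p ∈ L_σ and q ∈ L_τ with p + q = w (equivalently w ∈ L_σ + L_τ), and moreover L_σ and w - L_τ both contain a common point, then L_σ + L_τ = ℝ^n. -/

import Mathlib

/-- A linear subspace of `ℝ^n` is defined over `ℚ` if it is spanned by
vectors with rational coordinates. -/
def IsRationalSubspace {n : ℕ} (L : Submodule ℝ (Fin n → ℝ)) : Prop :=
  ∃ S : Set (Fin n → ℚ), L = Submodule.span ℝ ((fun q : Fin n → ℚ => fun i => (q i : ℝ)) '' S)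

/-- The coefficient-wise coercion `ℚ^n → ℝ^n` as a `ℚ`-linear map. -/
def coeMap (n : ℕ) : (Fin n → ℚ) →ₗ[ℚ] (Fin n → ℝ) where
  toFun v := fun i => (v i : ℝ)
  map_add' a b := by ext i; simp only [Pi.add_apply]; push_cast; ring
  map_smul' c a := by ext i; push_cast; simp [Rat.smul_def]

theorem rational_span_top {n : ℕ} (w : Fin n → ℝ)
    (hw : ∀ q : Fin n → ℚ, (∑ i, (q i : ℝ) * w i) = 0 → q = 0)
    (S : Set (Fin n → ℚ)) (hwmem : w ∈ Submodule.span ℝ (coeMap n '' S)) :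
    Submodule.span ℝ (coeMap n '' S) = ⊤ := by
  set M := Submodule.span ℝ (coeMap n '' S) with hM
  by_contra hne
  by_cases hV : Submodule.span ℚ S = ⊤
  · -- then M contains all standard basis vectors, so M = ⊤
    apply hne
    have hsub : ∀ v ∈ Submodule.span ℚ S, coeMap n v ∈ M := by
      intro v hv
      have : Submodule.span ℚ S ≤ (M.restrictScalars ℚ).comap (coeMap n) := by
        rw [Submodule.span_le]
        intro s hs
        exact Submodule.subset_span ⟨s, hs, rfl⟩
      exact this hv
    rw [eq_top_iff]
    rw [← (Pi.basisFun ℝ (Fin n)).span_eq, Submodule.span_le]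
    rintro x ⟨i, rfl⟩
    have := hsub (Pi.single i 1) (hV ▸ Submodule.mem_top)
    rw [SetLike.mem_coe]
    convert this using 1
    ext j
    simp [coeMap, Pi.basisFun_apply, Pi.single_apply]
    split <;> norm_num
  · -- proper ℚ-span: get a rational functional vanishing on S
    obtain ⟨φ, hφne, hφbot⟩ := Submodule.exists_dual_map_eq_bot_of_lt_top
      (lt_top_iff_ne_top.mpr hV) inferInstance
    set qv : Fin n → ℚ := fun i => φ (Pi.single i 1) with hqv
    have hφeval : ∀ v : Fin n → ℚ, φ v = ∑ i, v i * qv i := by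
      intro v
      conv_lhs => rw [← Finset.univ_sum_single v]
      rw [map_sum]
      congr 1; ext i
      have : (Pi.single i (v i) : Fin n → ℚ) = v i • (Pi.single i 1 : Fin n → ℚ) := by
        ext j; simp [Pi.single_apply, Pi.smul_apply, mul_comm]
      rw [this, map_smul, smul_eq_mul]
    -- the corresponding real functional
    set ψ : (Fin n → ℝ) →ₗ[ℝ] ℝ := ∑ i, (qv i : ℝ) • LinearMap.proj i with hψ
    have hψeval : ∀ x : Fin n → ℝ, ψ x = ∑ i, (qv i : ℝ) * x i := by
      intro x; simp [hψ]
    have hMker : M ≤ LinearMap.ker ψ := by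
      rw [hM, Submodule.span_le]
      rintro x ⟨s, hs, rfl⟩
      have hφs : φ s = 0 := by
        have : φ s ∈ (Submodule.span ℚ S).map φ := ⟨s, Submodule.subset_span hs, rfl⟩
        rw [hφbot] at this
        rwa [Submodule.mem_bot] at this
      have : ((∑ i, s i * qv i : ℚ) : ℝ) = 0 := by
        rw [← hφeval s, hφs]; norm_cast
      rw [SetLike.mem_coe, LinearMap.mem_ker, hψeval]
      push_cast at this
      convert this using 1
      congr 1; ext i
      simp [coeMap]; ring
    have hwz : (∑ i, (qv i : ℝ) * w i) = 0 := by
      have := hMker hwmem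
      rw [LinearMap.mem_ker] at this
      rw [← hψeval w]; exact this
    have : qv = 0 := hw qv hwz
    apply hφne
    refine LinearMap.ext fun v => ?_
    rw [hφeval, this]
    simp

theorem stmt_1 (n : ℕ) (w : Fin n → ℝ)
    (hw : ∀ q : Fin n → ℚ, (∑ i, (q i : ℝ) * w i) = 0 → q = 0)
    (Lσ Lτ : Submodule ℝ (Fin n → ℝ))
    (hLσ : IsRationalSubspace Lσ) (hLτ : IsRationalSubspace Lτ)
    (p q : Fin n → ℝ) (hp : p ∈ Lσ) (hq : q ∈ Lτ) (hpq : p + q = w)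
    (hcommon : ∃ z : Fin n → ℝ, z ∈ Lσ ∧ w - z ∈ Lτ) :
    Lσ ⊔ Lτ = ⊤ := by
  obtain ⟨S₁, hS₁⟩ := hLσ
  obtain ⟨S₂, hS₂⟩ := hLτ
  have himg : ∀ S : Set (Fin n → ℚ),
      (fun q : Fin n → ℚ => fun i => (q i : ℝ)) '' S = coeMap n '' S := by
    intro S; rfl
  have hsup : Lσ ⊔ Lτ = Submodule.span ℝ (coeMap n '' (S₁ ∪ S₂)) := by
    rw [hS₁, hS₂, himg, himg, Set.image_union, Submodule.span_union]
  have hwmem : w ∈ Lσ ⊔ Lτ := by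
    rw [← hpq]
    exact Submodule.add_mem_sup hp hq
  rw [hsup]
  exact rational_span_top w hw (S₁ ∪ S₂) (hsup ▸ hwmem)
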